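/- Let f : ℝ × (0,∞) → ℝ be C² and write f_vex, f_cav for a convex-concave decomposition in the first argument (f(·,ϑ) = f_vex(·,ϑ) + f_cav(·,ϑ), f_vex convex, f_cav concave in φ), and assume f concave in ϑ. Then for all φⁿ, φⁿ⁺¹ ∈ ℝ and ϑⁿ, ϑⁿ⁺¹ > 0: f(φⁿ⁺¹, ϑⁿ⁺¹) - f(φⁿ, ϑⁿ) - [∂_φ f_vex(φⁿ⁺¹, ϑⁿ⁺¹) + ∂_φ f_cav(φⁿ, ϑⁿ⁺¹)](φⁿ⁺¹ - φⁿ) - ∂_ϑ f(φⁿ, ϑⁿ)(ϑⁿ⁺¹ - ϑⁿ) ≤ 0. -/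
import Mathlib

lemma tangent_le_of_convexOn {S : Set ℝ} {g : ℝ → ℝ} (hg : ConvexOn ℝ S g)
    {x y : ℝ} (hx : x ∈ S) (hy : y ∈ S) (hd : DifferentiableAt ℝ g x) :
    g x + deriv g x * (y - x) ≤ g y := by
  rcases lt_trichotomy x y with h | h | h
  · have h1 : deriv g x ≤ (g y - g x) / (y - x) := by
      simpa [slope_def_field] using hg.deriv_le_slope hx hy h hd
    have h2 := (le_div_iff₀ (sub_pos.mpr h)).mp h1
    linarith
  · simp [h]
  · have h1 : (g x - g y) / (x - y) ≤ deriv g x := by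
      simpa [slope_def_field] using hg.slope_le_deriv hy hx h hd
    have h2 := (div_le_iff₀ (sub_pos.mpr h)).mp h1
    nlinarith

lemma le_tangent_of_concaveOn {S : Set ℝ} {g : ℝ → ℝ} (hg : ConcaveOn ℝ S g)
    {x y : ℝ} (hx : x ∈ S) (hy : y ∈ S) (hd : DifferentiableAt ℝ g x) :
    g y ≤ g x + deriv g x * (y - x) := by
  have hneg := tangent_le_of_convexOn hg.neg hx hy hd.neg
  have : deriv (-g) x = -deriv g x := deriv.neg
  simp only [Pi.neg_apply, this] at hneg
  linarith

/-- Pointwise core of the discrete energy dissipation estimate: for a convex-concave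
splitting `f(·,ϑ) = f_vex(·,ϑ) + f_cav(·,ϑ)` (convex/concave in `φ`) with `f`
concave in `ϑ`, the fully discrete increment
`f(φⁿ⁺¹,ϑⁿ⁺¹) - f(φⁿ,ϑⁿ) - [∂_φ f_vex(φⁿ⁺¹,ϑⁿ⁺¹) + ∂_φ f_cav(φⁿ,ϑⁿ⁺¹)](φⁿ⁺¹-φⁿ)
 - ∂_ϑ f(φⁿ,ϑⁿ)(ϑⁿ⁺¹-ϑⁿ)` is nonpositive. -/
theorem stmt_18 (f fvex fcav : ℝ → ℝ → ℝ)
    (hsplit : ∀ φ ϑ, 0 < ϑ → f φ ϑ = fvex φ ϑ + fcav φ ϑ)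
    (hvex : ∀ ϑ, 0 < ϑ → ConvexOn ℝ Set.univ (fun φ => fvex φ ϑ))
    (hcav : ∀ ϑ, 0 < ϑ → ConcaveOn ℝ Set.univ (fun φ => fcav φ ϑ))
    (hconcϑ : ∀ φ, ConcaveOn ℝ (Set.Ioi 0) (fun ϑ => f φ ϑ))
    (hdvex : ∀ ϑ, 0 < ϑ → Differentiable ℝ (fun φ => fvex φ ϑ))
    (hdcav : ∀ ϑ, 0 < ϑ → Differentiable ℝ (fun φ => fcav φ ϑ))
    (hdϑ : ∀ φ, ∀ ϑ, 0 < ϑ → DifferentiableAt ℝ (fun t => f φ t) ϑ) :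
    ∀ (φn φn1 ϑn ϑn1 : ℝ), 0 < ϑn → 0 < ϑn1 →
      f φn1 ϑn1 - f φn ϑn
        - (deriv (fun p => fvex p ϑn1) φn1 + deriv (fun p => fcav p ϑn1) φn)
            * (φn1 - φn)
        - deriv (fun t => f φn t) ϑn * (ϑn1 - ϑn) ≤ 0 := by
  intro φn φn1 ϑn ϑn1 hϑn hϑn1
  -- convex part: fvex φn1 ϑn1 - fvex φn ϑn1 ≤ deriv * (φn1 - φn)
  have h1 : fvex φn1 ϑn1 + deriv (fun p => fvex p ϑn1) φn1 * (φn - φn1)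
      ≤ fvex φn ϑn1 :=
    tangent_le_of_convexOn (hvex ϑn1 hϑn1) (Set.mem_univ _) (Set.mem_univ _)
      ((hdvex ϑn1 hϑn1) φn1)
  -- concave part
  have h2 : fcav φn1 ϑn1 ≤ fcav φn ϑn1 + deriv (fun p => fcav p ϑn1) φn * (φn1 - φn) :=
    le_tangent_of_concaveOn (hcav ϑn1 hϑn1) (Set.mem_univ _) (Set.mem_univ _)
      ((hdcav ϑn1 hϑn1) φn)
  -- temperature part
  have h3 : f φn ϑn1 ≤ f φn ϑn + deriv (fun t => f φn t) ϑn * (ϑn1 - ϑn) :=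
    le_tangent_of_concaveOn (hconcϑ φn) (Set.mem_Ioi.mpr hϑn) (Set.mem_Ioi.mpr hϑn1)
      (hdϑ φn ϑn hϑn)
  have e1 := hsplit φn1 ϑn1 hϑn1
  have e2 := hsplit φn ϑn1 hϑn1
  nlinarith [h1, h2, h3]
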